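/- Let f(x) = Σ_{i=0}^{3} a_i x^{q^i} and g(x) = Σ_{i=0}^{3} b_i x^{q^i} be q-polynomials over F_{q^4} with D_f = D_g. Then N(a_1) + N(a_2) + N(a_3) + a_1^{1+q^2}·a_3^{q+q^3} + a_1^{q+q^3}·a_3^{1+q^2} + Tr(a_1·a_2^{q+q^2}·a_3^{q^3}) = N(b_1) + N(b_2) + N(b_3) + b_1^{1+q^2}·b_3^{q+q^3} + b_1^{q+q^3}·b_3^{1+q^2} + Tr(b_1·b_2^{q+q^2}·b_3^{q^3}). -/

import Mathlib

open Finset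

section Aux
variable {q : ℕ} {F : Type} [Field F] [Fintype F] [DecidableEq F]

lemma aux_sum_units (h : F → F) :
    ∑ x : Fˣ, h (x : F) = ∑ x ∈ Finset.univ.filter (fun x : F => x ≠ 0), h x := by
  refine Finset.sum_bij (fun (x : Fˣ) _ => (x : F)) ?_ ?_ ?_ ?_
  · intro a _; simp [a.ne_zero]
  · intro a _ b _ hab; exact Units.ext hab
  · intro b hb
    simp only [Finset.mem_filter, Finset.mem_univ, true_and] at hb
    exact ⟨Units.mk0 b hb, Finset.mem_univ _, rfl⟩
  · intros; rfl

lemma aux_sum_nonzero_pow (hF : Fintype.card F = q ^ 4) (m : ℕ) :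
    ∑ x ∈ Finset.univ.filter (fun x : F => x ≠ 0), x ^ m
      = if (q ^ 4 - 1) ∣ m then (-1 : F) else 0 := by
  rw [← aux_sum_units (fun x : F => x ^ m), ← hF]
  simpa using FiniteField.sum_pow_units F m

omit [DecidableEq F] in
lemma aux_pow_qmod (hF : Fintype.card F = q ^ 4) (x : F) (j : ℕ) :
    x ^ q ^ j = x ^ q ^ (j % 4) := by
  induction j using Nat.strong_induction_on with
  | _ j ih =>
    rcases lt_or_ge j 4 with h | h
    · rw [Nat.mod_eq_of_lt h]
    · have h4 : j % 4 = (j - 4) % 4 := by omega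
      rw [h4, ← ih (j - 4) (by omega)]
      have hj : q ^ j = q ^ (j - 4) * q ^ 4 := by rw [← pow_add]; congr 1; omega
      rw [hj, pow_mul, ← hF, FiniteField.pow_card]

lemma aux_T (hF : Fintype.card F = q ^ 4) (hq2 : 2 ≤ q) (u v : ℕ) :
    ∑ x ∈ Finset.univ.filter (fun x : F => x ≠ 0), x ^ u / x ^ v
      = if u % (q ^ 4 - 1) = v % (q ^ 4 - 1) then (-1 : F) else 0 := by
  have hq4 : 16 ≤ q ^ 4 := by
    calc (16:ℕ) = 2 ^ 4 := by norm_num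
    _ ≤ q ^ 4 := Nat.pow_le_pow_left hq2 4
  have h1 : ∀ x ∈ Finset.univ.filter (fun x : F => x ≠ 0),
      x ^ u / x ^ v = x ^ (u + v * (q ^ 4 - 2)) := by
    intro x hx
    have hx0 : x ≠ 0 := by simpa using hx
    have hxq : x ^ (q ^ 4 - 1) = 1 := by
      rw [← hF]; exact FiniteField.pow_card_sub_one_eq_one x hx0
    have hv : x ^ v * x ^ (v * (q ^ 4 - 2)) = 1 := by
      rw [← pow_add]
      have hvv : v + v * (q ^ 4 - 2) = (q ^ 4 - 1) * v := by
        have : q ^ 4 - 2 + 1 = q ^ 4 - 1 := by omega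
        nlinarith [Nat.sub_add_cancel (by omega : 2 ≤ q ^ 4)]
      rw [hvv, pow_mul, hxq, one_pow]
    rw [div_eq_mul_inv, inv_eq_of_mul_eq_one_right hv, ← pow_add]
  rw [Finset.sum_congr rfl h1, aux_sum_nonzero_pow hF]
  congr 1
  have hdd : (q ^ 4 - 1) ∣ (u + v * (q ^ 4 - 2)) ↔ u % (q ^ 4 - 1) = v % (q ^ 4 - 1) := by
    show _ ↔ Nat.ModEq (q ^ 4 - 1) u v
    rw [Nat.modEq_iff_dvd, ← Int.natCast_dvd_natCast]
    have hc1 : ((u + v * (q ^ 4 - 2) : ℕ) : ℤ) = (u : ℤ) + v * ((q:ℤ) ^ 4 - 2) := by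
      push_cast [Nat.cast_sub (by omega : 2 ≤ q ^ 4)]; ring
    have hc2 : ((q ^ 4 - 1 : ℕ) : ℤ) = (q:ℤ) ^ 4 - 1 := by
      push_cast [Nat.cast_sub (by omega : 1 ≤ q ^ 4)]; ring
    rw [hc1, hc2]
    constructor
    · intro ⟨c, hc⟩
      exact ⟨v - c, by linear_combination -hc⟩
    · intro ⟨c, hc⟩
      exact ⟨v - c, by linear_combination -hc⟩
  simp [hdd]

end Aux

open Finset

section Cond

lemma digit_unique {q c0 c1 c2 c3 d0 d1 d2 d3 : ℕ}
    (hc0 : c0 < q) (hc1 : c1 < q) (hc2 : c2 < q) (hc3 : c3 < q)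
    (hd0 : d0 < q) (hd1 : d1 < q) (hd2 : d2 < q) (hd3 : d3 < q)
    (h : c0 * q ^ 0 + c1 * q ^ 1 + c2 * q ^ 2 + c3 * q ^ 3
       = d0 * q ^ 0 + d1 * q ^ 1 + d2 * q ^ 2 + d3 * q ^ 3) :
    c0 = d0 ∧ c1 = d1 ∧ c2 = d2 ∧ c3 = d3 := by
  have hq : 0 < q := by omega
  have h' : c0 + q * (c1 + q * (c2 + q * c3)) = d0 + q * (d1 + q * (d2 + q * d3)) := by
    have l : ∀ a0 a1 a2 a3 : ℕ, a0 * q ^ 0 + a1 * q ^ 1 + a2 * q ^ 2 + a3 * q ^ 3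
        = a0 + q * (a1 + q * (a2 + q * a3)) := by intros; ring
    rw [← l, ← l]; exact h
  have e0 : c0 = d0 := by
    have := congrArg (· % q) h'
    simpa [Nat.add_mul_mod_self_left, Nat.mod_eq_of_lt hc0, Nat.mod_eq_of_lt hd0] using this
  have h1 : c1 + q * (c2 + q * c3) = d1 + q * (d2 + q * d3) :=
    Nat.eq_of_mul_eq_mul_left hq (by omega)
  have e1 : c1 = d1 := by
    have := congrArg (· % q) h1
    simpa [Nat.add_mul_mod_self_left, Nat.mod_eq_of_lt hc1, Nat.mod_eq_of_lt hd1] using this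
  have h2 : c2 + q * c3 = d2 + q * d3 := Nat.eq_of_mul_eq_mul_left hq (by omega)
  have e2 : c2 = d2 := by
    have := congrArg (· % q) h2
    simpa [Nat.add_mul_mod_self_left, Nat.mod_eq_of_lt hc2, Nat.mod_eq_of_lt hd2] using this
  have e3 : c3 = d3 := Nat.eq_of_mul_eq_mul_left hq (by omega)
  exact ⟨e0, e1, e2, e3⟩

lemma msdigit (q : ℕ) (s : Multiset ℕ) (hs : ∀ j ∈ s, j < 4) :
    (s.map (q ^ ·)).sum = ∑ t ∈ Finset.range 4, s.count t * q ^ t := by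
  induction s using Multiset.induction with
  | empty => simp
  | cons a s ih =>
    have ha : a < 4 := hs a (Multiset.mem_cons_self a s)
    rw [Multiset.map_cons, Multiset.sum_cons,
      ih (fun j hj => hs j (Multiset.mem_cons_of_mem hj))]
    simp only [Multiset.count_cons]
    have : ∑ t ∈ Finset.range 4, (Multiset.count t s + if t = a then 1 else 0) * q ^ t
        = (∑ t ∈ Finset.range 4, Multiset.count t s * q ^ t)
          + ∑ t ∈ Finset.range 4, (if t = a then 1 else 0) * q ^ t := by
      rw [← Finset.sum_add_distrib]
      exact Finset.sum_congr rfl fun t _ => by ring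
    rw [this]
    have : ∑ t ∈ Finset.range 4, (if t = a then 1 else 0) * q ^ t = q ^ a := by
      have : ∀ t, (if t = a then 1 else 0) * q ^ t = if a = t then q ^ t else 0 := by
        intro t
        rcases eq_or_ne t a with rfl | h
        · simp
        · simp [h, Ne.symm h]
      simp only [this]
      rw [Finset.sum_ite_eq (Finset.range 4) a (fun t => q ^ t)]
      simp [Finset.mem_range.mpr ha]
    rw [this]
    omega

/-- sums of a multiset of ≤ 4 q-powers with exponents < 4 -/
lemma ms_lt_bound {q : ℕ} (hq5 : 5 ≤ q) {j : ℕ} (hj : j < 4) : q ^ j ≤ q ^ 3 :=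
  Nat.pow_le_pow_right (by omega) (by omega)

lemma q4_big {q : ℕ} (hq5 : 5 ≤ q) : 4 * q ^ 3 < q ^ 4 - 1 := by
  have h1 : 125 ≤ q ^ 3 := by
    calc (125:ℕ) = 5 ^ 3 := by norm_num
    _ ≤ q ^ 3 := Nat.pow_le_pow_left hq5 3
  have h2 : 5 * q ^ 3 ≤ q * q ^ 3 := Nat.mul_le_mul_right _ hq5
  have h3 : q * q ^ 3 = q ^ 4 := by ring
  omega

lemma mod_eq_of_eq {n u v : ℕ} (h : u = v) : u % n = v % n := by rw [h]

/-- equal sums of four q-powers (exponents < 4) give equal multisets, q ≥ 5 -/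
lemma pow_sum_eq_iff4 {q : ℕ} (hq5 : 5 ≤ q) {j0 j1 j2 j3 k0 k1 k2 k3 : ℕ}
    (h0 : j0 < 4) (h1 : j1 < 4) (h2 : j2 < 4) (h3 : j3 < 4)
    (g0 : k0 < 4) (g1 : k1 < 4) (g2 : k2 < 4) (g3 : k3 < 4)
    (h : q ^ j0 + q ^ j1 + q ^ j2 + q ^ j3 = q ^ k0 + q ^ k1 + q ^ k2 + q ^ k3) :
    ({j0, j1, j2, j3} : Multiset ℕ) = {k0, k1, k2, k3} := by
  set s : Multiset ℕ := {j0, j1, j2, j3} with hs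
  set t : Multiset ℕ := {k0, k1, k2, k3} with ht
  have hsmem : ∀ j ∈ s, j < 4 := by
    intro j hj
    simp only [hs, Multiset.insert_eq_cons, Multiset.mem_cons, Multiset.mem_singleton] at hj
    rcases hj with rfl | rfl | rfl | rfl <;> assumption
  have htmem : ∀ j ∈ t, j < 4 := by
    intro j hj
    simp only [ht, Multiset.insert_eq_cons, Multiset.mem_cons, Multiset.mem_singleton] at hj
    rcases hj with rfl | rfl | rfl | rfl <;> assumption
  have hsum_s : (s.map (q ^ ·)).sum = q ^ j0 + q ^ j1 + q ^ j2 + q ^ j3 := by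
    simp [hs, Multiset.insert_eq_cons]; ring
  have hsum_t : (t.map (q ^ ·)).sum = q ^ k0 + q ^ k1 + q ^ k2 + q ^ k3 := by
    simp [ht, Multiset.insert_eq_cons]; ring
  have hds := msdigit q s hsmem
  have hdt := msdigit q t htmem
  have hsum : ∑ u ∈ Finset.range 4, s.count u * q ^ u
      = ∑ u ∈ Finset.range 4, t.count u * q ^ u := by
    rw [← hds, ← hdt, hsum_s, hsum_t]; exact h
  have hrange : ∀ m : Multiset ℕ, ∑ u ∈ Finset.range 4, m.count u * q ^ u
      = m.count 0 * q ^ 0 + m.count 1 * q ^ 1 + m.count 2 * q ^ 2 + m.count 3 * q ^ 3 := by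
    intro m
    rw [Finset.sum_range_succ, Finset.sum_range_succ, Finset.sum_range_succ,
      Finset.sum_range_succ, Finset.sum_range_zero]
    omega
  rw [hrange, hrange] at hsum
  have hcard_s : Multiset.card s = 4 := by simp [hs, Multiset.insert_eq_cons]
  have hcard_t : Multiset.card t = 4 := by simp [ht, Multiset.insert_eq_cons]
  have hclt : ∀ (m : Multiset ℕ), Multiset.card m = 4 → ∀ u : ℕ, m.count u < q := by
    intro m hm u
    have := Multiset.count_le_card u m
    omega
  obtain ⟨e0, e1, e2, e3⟩ := digit_unique
    (hclt s hcard_s 0) (hclt s hcard_s 1) (hclt s hcard_s 2) (hclt s hcard_s 3)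
    (hclt t hcard_t 0) (hclt t hcard_t 1) (hclt t hcard_t 2) (hclt t hcard_t 3) hsum
  ext u
  rcases lt_or_ge u 4 with hu | hu
  · interval_cases u <;> assumption
  · rw [Multiset.count_eq_zero.mpr, Multiset.count_eq_zero.mpr]
    · intro hmem; exact absurd (htmem u hmem) (by omega)
    · intro hmem; exact absurd (hsmem u hmem) (by omega)

end Cond

section CondMain
variable {q : ℕ}

lemma mod_eq_eq {n u v : ℕ} (hu : u < n) (hv : v < n) (h : u % n = v % n) : u = v := by
  rwa [Nat.mod_eq_of_lt hu, Nat.mod_eq_of_lt hv] at h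

lemma cond1 (hq2 : 2 ≤ q) {j k : ℕ} (hj : j < 4) (hk : k < 4) :
    (q ^ j % (q ^ 4 - 1) = q ^ k % (q ^ 4 - 1)) ↔ j = k := by
  rcases lt_or_ge q 5 with hq5 | hq5
  · interval_cases q
    · exact (by decide : ∀ a b : Fin 4,
        ((2:ℕ) ^ (a:ℕ) % (2 ^ 4 - 1) = 2 ^ (b:ℕ) % (2 ^ 4 - 1)) ↔ (a:ℕ) = (b:ℕ)) ⟨j, hj⟩ ⟨k, hk⟩
    · exact (by decide : ∀ a b : Fin 4,
        ((3:ℕ) ^ (a:ℕ) % (3 ^ 4 - 1) = 3 ^ (b:ℕ) % (3 ^ 4 - 1)) ↔ (a:ℕ) = (b:ℕ)) ⟨j, hj⟩ ⟨k, hk⟩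
    · exact (by decide : ∀ a b : Fin 4,
        ((4:ℕ) ^ (a:ℕ) % (4 ^ 4 - 1) = 4 ^ (b:ℕ) % (4 ^ 4 - 1)) ↔ (a:ℕ) = (b:ℕ)) ⟨j, hj⟩ ⟨k, hk⟩
  · constructor
    · intro h
      have hb := q4_big hq5
      have h1 := ms_lt_bound hq5 hj
      have h2 := ms_lt_bound hq5 hk
      have := mod_eq_eq (by omega) (by omega) h
      exact Nat.pow_right_injective (by omega) this
    · rintro rfl; rfl

lemma cond2 (hq2 : 2 ≤ q) {j0 j1 k0 k1 : ℕ}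
    (h0 : j0 < 4) (h1 : j1 < 4) (g0 : k0 < 4) (g1 : k1 < 4) (hk : k0 ≠ k1) :
    ((q ^ j0 + q ^ j1) % (q ^ 4 - 1) = (q ^ k0 + q ^ k1) % (q ^ 4 - 1))
      ↔ ({j0, j1} : Multiset ℕ) = {k0, k1} := by
  rcases lt_or_ge q 5 with hq5 | hq5
  · interval_cases q
    · exact (by decide : ∀ a b c d : Fin 4, (c:ℕ) ≠ (d:ℕ) →
        ((((2:ℕ) ^ (a:ℕ) + 2 ^ (b:ℕ)) % (2 ^ 4 - 1) = (2 ^ (c:ℕ) + 2 ^ (d:ℕ)) % (2 ^ 4 - 1))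
          ↔ ({(a:ℕ), (b:ℕ)} : Multiset ℕ) = {(c:ℕ), (d:ℕ)}))
        ⟨j0, h0⟩ ⟨j1, h1⟩ ⟨k0, g0⟩ ⟨k1, g1⟩ hk
    · exact (by decide : ∀ a b c d : Fin 4, (c:ℕ) ≠ (d:ℕ) →
        ((((3:ℕ) ^ (a:ℕ) + 3 ^ (b:ℕ)) % (3 ^ 4 - 1) = (3 ^ (c:ℕ) + 3 ^ (d:ℕ)) % (3 ^ 4 - 1))
          ↔ ({(a:ℕ), (b:ℕ)} : Multiset ℕ) = {(c:ℕ), (d:ℕ)}))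
        ⟨j0, h0⟩ ⟨j1, h1⟩ ⟨k0, g0⟩ ⟨k1, g1⟩ hk
    · exact (by decide : ∀ a b c d : Fin 4, (c:ℕ) ≠ (d:ℕ) →
        ((((4:ℕ) ^ (a:ℕ) + 4 ^ (b:ℕ)) % (4 ^ 4 - 1) = (4 ^ (c:ℕ) + 4 ^ (d:ℕ)) % (4 ^ 4 - 1))
          ↔ ({(a:ℕ), (b:ℕ)} : Multiset ℕ) = {(c:ℕ), (d:ℕ)}))
        ⟨j0, h0⟩ ⟨j1, h1⟩ ⟨k0, g0⟩ ⟨k1, g1⟩ hk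
  · have hb := q4_big hq5
    have b0 := ms_lt_bound hq5 h0; have b1 := ms_lt_bound hq5 h1
    have c0 := ms_lt_bound hq5 g0; have c1 := ms_lt_bound hq5 g1
    constructor
    · intro h
      have heq : q ^ j0 + q ^ j1 = q ^ k0 + q ^ k1 :=
        mod_eq_eq (by omega) (by omega) h
      have h4 : q ^ j0 + q ^ j1 + q ^ 0 + q ^ 0 = q ^ k0 + q ^ k1 + q ^ 0 + q ^ 0 := by omega
      have hms := pow_sum_eq_iff4 hq5 h0 h1 (by omega) (by omega) g0 g1 (by omega) (by omega) h4
      have hsplit : ∀ x y : ℕ, ({x, y, 0, 0} : Multiset ℕ) = {x, y} + {0, 0} := by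
        intro x y; rfl
      rw [hsplit, hsplit] at hms
      exact add_right_cancel hms
    · intro h
      have := congrArg (fun m : Multiset ℕ => (m.map (q ^ ·)).sum) h
      simp only [Multiset.insert_eq_cons, Multiset.map_cons, Multiset.sum_cons,
        Multiset.map_singleton, Multiset.sum_singleton] at this
      exact mod_eq_of_eq (by omega)

lemma cond3 (hq2 : 2 ≤ q) {j0 j1 j2 k0 k1 k2 : ℕ}
    (h0 : j0 < 4) (h1 : j1 < 4) (h2 : j2 < 4)
    (g0 : k0 < 4) (g1 : k1 < 4) (g2 : k2 < 4)
    (hk01 : k0 ≠ k1) (hk02 : k0 ≠ k2) (hk12 : k1 ≠ k2) :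
    ((q ^ j0 + q ^ j1 + q ^ j2) % (q ^ 4 - 1) = (q ^ k0 + q ^ k1 + q ^ k2) % (q ^ 4 - 1))
      ↔ ({j0, j1, j2} : Multiset ℕ) = {k0, k1, k2} := by
  rcases lt_or_ge q 5 with hq5 | hq5
  · interval_cases q
    · exact (by decide : ∀ a b c d e f : Fin 4, (d:ℕ) ≠ (e:ℕ) → (d:ℕ) ≠ (f:ℕ) → (e:ℕ) ≠ (f:ℕ) →
        ((((2:ℕ) ^ (a:ℕ) + 2 ^ (b:ℕ) + 2 ^ (c:ℕ)) % (2 ^ 4 - 1)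
            = (2 ^ (d:ℕ) + 2 ^ (e:ℕ) + 2 ^ (f:ℕ)) % (2 ^ 4 - 1))
          ↔ ({(a:ℕ), (b:ℕ), (c:ℕ)} : Multiset ℕ) = {(d:ℕ), (e:ℕ), (f:ℕ)}))
        ⟨j0, h0⟩ ⟨j1, h1⟩ ⟨j2, h2⟩ ⟨k0, g0⟩ ⟨k1, g1⟩ ⟨k2, g2⟩ hk01 hk02 hk12
    · exact (by decide : ∀ a b c d e f : Fin 4, (d:ℕ) ≠ (e:ℕ) → (d:ℕ) ≠ (f:ℕ) → (e:ℕ) ≠ (f:ℕ) →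
        ((((3:ℕ) ^ (a:ℕ) + 3 ^ (b:ℕ) + 3 ^ (c:ℕ)) % (3 ^ 4 - 1)
            = (3 ^ (d:ℕ) + 3 ^ (e:ℕ) + 3 ^ (f:ℕ)) % (3 ^ 4 - 1))
          ↔ ({(a:ℕ), (b:ℕ), (c:ℕ)} : Multiset ℕ) = {(d:ℕ), (e:ℕ), (f:ℕ)}))
        ⟨j0, h0⟩ ⟨j1, h1⟩ ⟨j2, h2⟩ ⟨k0, g0⟩ ⟨k1, g1⟩ ⟨k2, g2⟩ hk01 hk02 hk12
    · exact (by decide : ∀ a b c d e f : Fin 4, (d:ℕ) ≠ (e:ℕ) → (d:ℕ) ≠ (f:ℕ) → (e:ℕ) ≠ (f:ℕ) →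
        ((((4:ℕ) ^ (a:ℕ) + 4 ^ (b:ℕ) + 4 ^ (c:ℕ)) % (4 ^ 4 - 1)
            = (4 ^ (d:ℕ) + 4 ^ (e:ℕ) + 4 ^ (f:ℕ)) % (4 ^ 4 - 1))
          ↔ ({(a:ℕ), (b:ℕ), (c:ℕ)} : Multiset ℕ) = {(d:ℕ), (e:ℕ), (f:ℕ)}))
        ⟨j0, h0⟩ ⟨j1, h1⟩ ⟨j2, h2⟩ ⟨k0, g0⟩ ⟨k1, g1⟩ ⟨k2, g2⟩ hk01 hk02 hk12
  · have hb := q4_big hq5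
    have b0 := ms_lt_bound hq5 h0; have b1 := ms_lt_bound hq5 h1; have b2 := ms_lt_bound hq5 h2
    have c0 := ms_lt_bound hq5 g0; have c1 := ms_lt_bound hq5 g1; have c2 := ms_lt_bound hq5 g2
    constructor
    · intro h
      have heq : q ^ j0 + q ^ j1 + q ^ j2 = q ^ k0 + q ^ k1 + q ^ k2 :=
        mod_eq_eq (by omega) (by omega) h
      have h4 : q ^ j0 + q ^ j1 + q ^ j2 + q ^ 0 = q ^ k0 + q ^ k1 + q ^ k2 + q ^ 0 := by omega
      have hms := pow_sum_eq_iff4 hq5 h0 h1 h2 (by omega) g0 g1 g2 (by omega) h4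
      have hsplit : ∀ x y z : ℕ, ({x, y, z, 0} : Multiset ℕ) = {x, y, z} + {0} := by
        intro x y z; rfl
      rw [hsplit, hsplit] at hms
      exact add_right_cancel hms
    · intro h
      have := congrArg (fun m : Multiset ℕ => (m.map (q ^ ·)).sum) h
      simp only [Multiset.insert_eq_cons, Multiset.map_cons, Multiset.sum_cons,
        Multiset.map_singleton, Multiset.sum_singleton] at this
      exact mod_eq_of_eq (by omega)

lemma cond4 (hq2 : 2 ≤ q) {j0 j1 j2 j3 : ℕ}
    (h0 : j0 < 4) (h1 : j1 < 4) (h2 : j2 < 4) (h3 : j3 < 4) :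
    ((q ^ j0 + q ^ j1 + q ^ j2 + q ^ j3) % (q ^ 4 - 1)
        = (q ^ 0 + q ^ 1 + q ^ 2 + q ^ 3) % (q ^ 4 - 1))
      ↔ ({j0, j1, j2, j3} : Multiset ℕ) = {0, 1, 2, 3} := by
  rcases lt_or_ge q 5 with hq5 | hq5
  · interval_cases q
    · exact (by decide : ∀ a b c d : Fin 4,
        ((((2:ℕ) ^ (a:ℕ) + 2 ^ (b:ℕ) + 2 ^ (c:ℕ) + 2 ^ (d:ℕ)) % (2 ^ 4 - 1)
            = (2 ^ 0 + 2 ^ 1 + 2 ^ 2 + 2 ^ 3) % (2 ^ 4 - 1))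
          ↔ ({(a:ℕ), (b:ℕ), (c:ℕ), (d:ℕ)} : Multiset ℕ) = {0, 1, 2, 3}))
        ⟨j0, h0⟩ ⟨j1, h1⟩ ⟨j2, h2⟩ ⟨j3, h3⟩
    · exact (by decide : ∀ a b c d : Fin 4,
        ((((3:ℕ) ^ (a:ℕ) + 3 ^ (b:ℕ) + 3 ^ (c:ℕ) + 3 ^ (d:ℕ)) % (3 ^ 4 - 1)
            = (3 ^ 0 + 3 ^ 1 + 3 ^ 2 + 3 ^ 3) % (3 ^ 4 - 1))
          ↔ ({(a:ℕ), (b:ℕ), (c:ℕ), (d:ℕ)} : Multiset ℕ) = {0, 1, 2, 3}))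
        ⟨j0, h0⟩ ⟨j1, h1⟩ ⟨j2, h2⟩ ⟨j3, h3⟩
    · exact (by decide : ∀ a b c d : Fin 4,
        ((((4:ℕ) ^ (a:ℕ) + 4 ^ (b:ℕ) + 4 ^ (c:ℕ) + 4 ^ (d:ℕ)) % (4 ^ 4 - 1)
            = (4 ^ 0 + 4 ^ 1 + 4 ^ 2 + 4 ^ 3) % (4 ^ 4 - 1))
          ↔ ({(a:ℕ), (b:ℕ), (c:ℕ), (d:ℕ)} : Multiset ℕ) = {0, 1, 2, 3}))
        ⟨j0, h0⟩ ⟨j1, h1⟩ ⟨j2, h2⟩ ⟨j3, h3⟩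
  · have hb := q4_big hq5
    have b0 := ms_lt_bound hq5 h0; have b1 := ms_lt_bound hq5 h1
    have b2 := ms_lt_bound hq5 h2; have b3 := ms_lt_bound hq5 h3
    have c0 := ms_lt_bound hq5 (by omega : (0:ℕ) < 4)
    have c1 := ms_lt_bound hq5 (by omega : (1:ℕ) < 4)
    have c2 := ms_lt_bound hq5 (by omega : (2:ℕ) < 4)
    have c3 := ms_lt_bound hq5 (by omega : (3:ℕ) < 4)
    constructor
    · intro h
      have heq : q ^ j0 + q ^ j1 + q ^ j2 + q ^ j3 = q ^ 0 + q ^ 1 + q ^ 2 + q ^ 3 :=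
        mod_eq_eq (by omega) (by omega) h
      exact pow_sum_eq_iff4 hq5 h0 h1 h2 h3 (by omega) (by omega) (by omega) (by omega) heq
    · intro h
      have := congrArg (fun m : Multiset ℕ => (m.map (q ^ ·)).sum) h
      simp only [Multiset.insert_eq_cons, Multiset.map_cons, Multiset.sum_cons,
        Multiset.map_singleton, Multiset.sum_singleton] at this
      exact mod_eq_of_eq (by omega)

end CondMain

section Field2
variable {p e q : ℕ} {F : Type} [Field F] [Fintype F]

lemma char_eq (hp : p.Prime) (he : 0 < e) (hq : q = p ^ e) (hF : Fintype.card F = q ^ 4) :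
    CharP F p := by
  obtain ⟨n, hn1, hn2⟩ := FiniteField.card F (ringChar F)
  have hr : ringChar F = p := by
    have h2 : ringChar F ^ (n:ℕ) = p ^ (4 * e) := by
      rw [← hn2, hF, hq, ← pow_mul, mul_comm]
    have h1 : ringChar F ∣ p ^ (4 * e) :=
      h2 ▸ dvd_pow_self (ringChar F) (by positivity)
    exact (Nat.prime_dvd_prime_iff_eq hn1 hp).mp (hn1.dvd_of_dvd_pow h1)
  exact hr ▸ ringChar.charP F

lemma q_cast_zero (hp : p.Prime) (he : 0 < e) (hq : q = p ^ e) (hF : Fintype.card F = q ^ 4) :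
    (q : F) = 0 := by
  haveI := char_eq hp he hq hF
  rw [hq]
  push_cast
  rw [CharP.cast_eq_zero F p]
  exact zero_pow (by omega)

lemma q_ge_two (hp : p.Prime) (he : 0 < e) (hq : q = p ^ e) : 2 ≤ q := by
  have h1 : 2 ≤ p := hp.two_le
  calc (2:ℕ) ≤ p := h1
  _ = p ^ 1 := (pow_one p).symm
  _ ≤ p ^ e := Nat.pow_le_pow_right (by omega) he
  _ = q := hq.symm

variable [DecidableEq F]

lemma fiber_card_cast (hp : p.Prime) (he : 0 < e) (hq : q = p ^ e)
    (hF : Fintype.card F = q ^ 4)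
    (f : F → F) (hfadd : ∀ x y : F, f (x + y) = f x + f y) (hf0 : f 0 = 0)
    (y : F) (x0 : F) (hx0 : x0 ≠ 0) (hx0y : f x0 / x0 = y) :
    ((((Finset.univ.filter (fun x : F => x ≠ 0)).filter
        (fun x => f x / x = y)).card : F)) = -1 := by
  haveI := char_eq hp he hq hF
  haveI : Fact p.Prime := ⟨hp⟩
  set Fib := (Finset.univ.filter (fun x : F => x ≠ 0)).filter (fun x => f x / x = y) with hFib
  set K := Finset.univ.filter (fun x : F => f x = y * x) with hK
  have hinsert : K = insert 0 Fib := by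
    ext x
    simp only [hK, hFib, Finset.mem_insert, Finset.mem_filter, Finset.mem_univ, true_and]
    constructor
    · intro hx
      rcases eq_or_ne x 0 with rfl | hx0'
      · exact Or.inl rfl
      · exact Or.inr ⟨hx0', by rw [hx, mul_div_assoc, div_self hx0', mul_one]⟩
    · rintro (rfl | ⟨hx0', hx⟩)
      · rw [hf0, mul_zero]
      · rw [← hx]; field_simp
  have h0notin : (0:F) ∉ Fib := by simp [hFib]
  have hcardK : K.card = Fib.card + 1 := by
    rw [hinsert, Finset.card_insert_of_notMem h0notin]
  -- K is the kernel of an additive subgroup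
  have hfneg : ∀ x : F, f (-x) = - f x := by
    intro x
    have h := hfadd (-x) x
    rw [neg_add_cancel, hf0] at h
    exact eq_neg_of_add_eq_zero_left h.symm
  let H : AddSubgroup F :=
    { carrier := {x : F | f x = y * x}
      zero_mem' := by simp [hf0]
      add_mem' := by
        intro u v hu hv
        simp only [Set.mem_setOf_eq] at *
        rw [hfadd, hu, hv, mul_add]
      neg_mem' := by
        intro u hu
        simp only [Set.mem_setOf_eq] at *
        rw [hfneg, hu, mul_neg] }
  have hHK : Nat.card H = K.card := by
    have e1 : Nat.card H = Nat.card {x : F // f x = y * x} :=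
      Nat.card_congr (Equiv.subtypeEquivRight (fun x => Iff.rfl))
    rw [e1, Nat.card_eq_fintype_card, hK, Fintype.card_subtype]
  have hdvd : Nat.card H ∣ p ^ (4 * e) := by
    have := AddSubgroup.card_addSubgroup_dvd_card H
    rwa [Nat.card_eq_fintype_card (α := F), hF, hq, ← pow_mul, mul_comm e 4] at this
  obtain ⟨m, hm, hcard⟩ := (Nat.dvd_prime_pow hp).mp hdvd
  have hx0K : x0 ∈ K := by
    simp only [hK, Finset.mem_filter, Finset.mem_univ, true_and]
    exact (div_eq_iff hx0).mp hx0y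
  have h2le : 2 ≤ K.card := by
    have h1 : (0:F) ∈ K := by
      simp only [hK, Finset.mem_filter, Finset.mem_univ, true_and, hf0, mul_zero]
    exact Finset.one_lt_card.mpr ⟨0, h1, x0, hx0K, fun h => hx0 h.symm⟩
  have hKp : K.card = p ^ m := by rw [← hHK, hcard]
  have hm0 : m ≠ 0 := by
    intro h
    rw [h, pow_zero] at hKp
    omega
  have hKzero : ((K.card : ℕ) : F) = 0 := by
    rw [hKp]
    push_cast
    rw [CharP.cast_eq_zero F p]
    exact zero_pow hm0
  have hfin : ((Fib.card + 1 : ℕ) : F) = 0 := by rw [← hcardK]; exact hKzero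
  push_cast at hfin
  linear_combination hfin

end Field2

section Inv
variable {p e q : ℕ} {F : Type} [Field F] [Fintype F] [DecidableEq F]

lemma f_add (hp : p.Prime) (he : 0 < e) (hq : q = p ^ e) (hF : Fintype.card F = q ^ 4)
    (a : ℕ → F) (f : F → F) (hf : ∀ x : F, f x = ∑ i ∈ Finset.range 4, a i * x ^ q ^ i)
    (x y : F) : f (x + y) = f x + f y := by
  haveI := char_eq hp he hq hF
  haveI : Fact p.Prime := ⟨hp⟩
  simp only [hf, ← Finset.sum_add_distrib]
  refine Finset.sum_congr rfl fun i _ => ?_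
  rw [hq, ← pow_mul, add_pow_char_pow, mul_add]

lemma f_zero (hp : p.Prime) (he : 0 < e) (hq : q = p ^ e)
    (a : ℕ → F) (f : F → F) (hf : ∀ x : F, f x = ∑ i ∈ Finset.range 4, a i * x ^ q ^ i) :
    f 0 = 0 := by
  have hq2 : 2 ≤ q := q_ge_two hp he hq
  simp only [hf]
  refine Finset.sum_eq_zero fun i _ => ?_
  rw [zero_pow (by positivity), mul_zero]

lemma sum_pow_fiber (hp : p.Prime) (he : 0 < e) (hq : q = p ^ e) (hF : Fintype.card F = q ^ 4)
    (a : ℕ → F) (f : F → F) (hf : ∀ x : F, f x = ∑ i ∈ Finset.range 4, a i * x ^ q ^ i)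
    (n : ℕ) :
    ∑ x ∈ Finset.univ.filter (fun x : F => x ≠ 0), (f x / x) ^ n
      = - ∑ y ∈ (Finset.univ.filter (fun x : F => x ≠ 0)).image (fun x => f x / x), y ^ n := by
  set S := Finset.univ.filter (fun x : F => x ≠ 0) with hS
  have step := Finset.sum_fiberwise_of_maps_to (s := S)
    (t := S.image (fun x => f x / x)) (g := fun x => f x / x)
    (fun x hx => Finset.mem_image_of_mem _ hx) (fun x => (f x / x) ^ n)
  rw [← step, ← Finset.sum_neg_distrib]
  refine Finset.sum_congr rfl fun y hy => ?_
  obtain ⟨x0, hx0S, hx0y⟩ := Finset.mem_image.mp hy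
  have hx0 : x0 ≠ 0 := by simpa [hS] using hx0S
  have hcongr : ∀ x ∈ S.filter (fun x => f x / x = y), (f x / x) ^ n = y ^ n := by
    intro x hx
    rw [(Finset.mem_filter.mp hx).2]
  rw [Finset.sum_congr rfl hcongr, Finset.sum_const, nsmul_eq_mul,
    fiber_card_cast hp he hq hF f (f_add hp he hq hF a f hf) (f_zero hp he hq a f hf) y x0 hx0 hx0y,
    neg_one_mul]

lemma power_sums_eq (hp : p.Prime) (he : 0 < e) (hq : q = p ^ e) (hF : Fintype.card F = q ^ 4)
    (a b : ℕ → F) (f g : F → F)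
    (hf : ∀ x : F, f x = ∑ i ∈ Finset.range 4, a i * x ^ q ^ i)
    (hg : ∀ x : F, g x = ∑ i ∈ Finset.range 4, b i * x ^ q ^ i)
    (hD : {y : F | ∃ x : F, x ≠ 0 ∧ f x / x = y} = {y : F | ∃ x : F, x ≠ 0 ∧ g x / x = y})
    (n : ℕ) :
    ∑ x ∈ Finset.univ.filter (fun x : F => x ≠ 0), (f x / x) ^ n
      = ∑ x ∈ Finset.univ.filter (fun x : F => x ≠ 0), (g x / x) ^ n := by
  rw [sum_pow_fiber hp he hq hF a f hf n, sum_pow_fiber hp he hq hF b g hg n]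
  congr 1
  apply Finset.sum_congr _ (fun _ _ => rfl)
  ext y
  simp only [Finset.mem_image, Finset.mem_filter, Finset.mem_univ, true_and]
  have := Set.ext_iff.mp hD y
  simpa using this

end Inv

section Expand
variable {p e q : ℕ} {F : Type} [Field F] [Fintype F] [DecidableEq F]

lemma aux_factor (hp : p.Prime) (he : 0 < e) (hq : q = p ^ e) (hF : Fintype.card F = q ^ 4)
    (a : ℕ → F) (f : F → F) (hf : ∀ x : F, f x = ∑ i ∈ Finset.range 4, a i * x ^ q ^ i)
    (x : F) (k : ℕ) :
    (f x / x) ^ q ^ k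
      = ∑ i ∈ Finset.range 4, a i ^ q ^ k * (x ^ q ^ ((i + k) % 4) / x ^ q ^ k) := by
  haveI := char_eq hp he hq hF
  haveI : Fact p.Prime := ⟨hp⟩
  rw [div_pow, hf x]
  have hsum : (∑ i ∈ Finset.range 4, a i * x ^ q ^ i) ^ q ^ k
      = ∑ i ∈ Finset.range 4, (a i * x ^ q ^ i) ^ q ^ k := by
    rw [hq, ← pow_mul]
    exact sum_pow_char_pow p (e * k) _ _
  rw [hsum, Finset.sum_div]
  refine Finset.sum_congr rfl fun i _ => ?_
  rw [mul_pow, mul_div_assoc]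
  congr 2
  rw [← pow_mul, ← pow_add, aux_pow_qmod hF]

lemma master1 (hp : p.Prime) (he : 0 < e) (hq : q = p ^ e) (hF : Fintype.card F = q ^ 4)
    (a : ℕ → F) (f : F → F) (hf : ∀ x : F, f x = ∑ i ∈ Finset.range 4, a i * x ^ q ^ i)
    (k0 : ℕ) :
    ∑ x ∈ Finset.univ.filter (fun x : F => x ≠ 0), (f x / x) ^ q ^ k0
      = ∑ i0 ∈ Finset.range 4, a i0 ^ q ^ k0 *
          (if (q ^ ((i0 + k0) % 4)) % (q ^ 4 - 1) = (q ^ k0) % (q ^ 4 - 1)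
           then (-1 : F) else 0) := by
  have hq2 : 2 ≤ q := q_ge_two hp he hq
  have step1 : ∀ x ∈ Finset.univ.filter (fun x : F => x ≠ 0), (f x / x) ^ q ^ k0
      = ∑ i0 ∈ Finset.range 4, a i0 ^ q ^ k0 * (x ^ q ^ ((i0 + k0) % 4) / x ^ q ^ k0) :=
    fun x _ => aux_factor hp he hq hF a f hf x k0
  rw [Finset.sum_congr rfl step1, Finset.sum_comm]
  refine Finset.sum_congr rfl fun i0 _ => ?_
  rw [← Finset.mul_sum, aux_T hF hq2]

lemma master2 (hp : p.Prime) (he : 0 < e) (hq : q = p ^ e) (hF : Fintype.card F = q ^ 4)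
    (a : ℕ → F) (f : F → F) (hf : ∀ x : F, f x = ∑ i ∈ Finset.range 4, a i * x ^ q ^ i)
    (k0 k1 : ℕ) :
    ∑ x ∈ Finset.univ.filter (fun x : F => x ≠ 0),
        (f x / x) ^ q ^ k0 * (f x / x) ^ q ^ k1
      = ∑ i1 ∈ Finset.range 4, ∑ i0 ∈ Finset.range 4,
          a i0 ^ q ^ k0 * a i1 ^ q ^ k1 *
            (if (q ^ ((i0 + k0) % 4) + q ^ ((i1 + k1) % 4)) % (q ^ 4 - 1)
                = (q ^ k0 + q ^ k1) % (q ^ 4 - 1) then (-1 : F) else 0) := by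
  have hq2 : 2 ≤ q := q_ge_two hp he hq
  have step1 : ∀ x ∈ Finset.univ.filter (fun x : F => x ≠ 0),
      (f x / x) ^ q ^ k0 * (f x / x) ^ q ^ k1
      = ∑ i1 ∈ Finset.range 4, ∑ i0 ∈ Finset.range 4,
          a i0 ^ q ^ k0 * a i1 ^ q ^ k1 *
            (x ^ (q ^ ((i0 + k0) % 4) + q ^ ((i1 + k1) % 4)) / x ^ (q ^ k0 + q ^ k1)) := by
    intro x _
    rw [aux_factor hp he hq hF a f hf x k0, aux_factor hp he hq hF a f hf x k1]
    simp only [Finset.sum_mul, Finset.mul_sum]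
    refine Finset.sum_congr rfl fun i1 _ => Finset.sum_congr rfl fun i0 _ => ?_
    rw [pow_add, pow_add]
    ring
  rw [Finset.sum_congr rfl step1, Finset.sum_comm]
  refine Finset.sum_congr rfl fun i1 _ => ?_
  rw [Finset.sum_comm]
  refine Finset.sum_congr rfl fun i0 _ => ?_
  rw [← Finset.mul_sum, aux_T hF hq2]

lemma master3 (hp : p.Prime) (he : 0 < e) (hq : q = p ^ e) (hF : Fintype.card F = q ^ 4)
    (a : ℕ → F) (f : F → F) (hf : ∀ x : F, f x = ∑ i ∈ Finset.range 4, a i * x ^ q ^ i)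
    (k0 k1 k2 : ℕ) :
    ∑ x ∈ Finset.univ.filter (fun x : F => x ≠ 0),
        (f x / x) ^ q ^ k0 * (f x / x) ^ q ^ k1 * (f x / x) ^ q ^ k2
      = ∑ i2 ∈ Finset.range 4, ∑ i1 ∈ Finset.range 4, ∑ i0 ∈ Finset.range 4,
          a i0 ^ q ^ k0 * a i1 ^ q ^ k1 * a i2 ^ q ^ k2 *
            (if (q ^ ((i0 + k0) % 4) + q ^ ((i1 + k1) % 4) + q ^ ((i2 + k2) % 4)) % (q ^ 4 - 1)
                = (q ^ k0 + q ^ k1 + q ^ k2) % (q ^ 4 - 1) then (-1 : F) else 0) := by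
  have hq2 : 2 ≤ q := q_ge_two hp he hq
  have step1 : ∀ x ∈ Finset.univ.filter (fun x : F => x ≠ 0),
      (f x / x) ^ q ^ k0 * (f x / x) ^ q ^ k1 * (f x / x) ^ q ^ k2
      = ∑ i2 ∈ Finset.range 4, ∑ i1 ∈ Finset.range 4, ∑ i0 ∈ Finset.range 4,
          a i0 ^ q ^ k0 * a i1 ^ q ^ k1 * a i2 ^ q ^ k2 *
            (x ^ (q ^ ((i0 + k0) % 4) + q ^ ((i1 + k1) % 4) + q ^ ((i2 + k2) % 4))
              / x ^ (q ^ k0 + q ^ k1 + q ^ k2)) := by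
    intro x _
    rw [aux_factor hp he hq hF a f hf x k0, aux_factor hp he hq hF a f hf x k1,
      aux_factor hp he hq hF a f hf x k2]
    simp only [Finset.sum_mul, Finset.mul_sum]
    refine Finset.sum_congr rfl fun i2 _ => Finset.sum_congr rfl fun i1 _ =>
      Finset.sum_congr rfl fun i0 _ => ?_
    rw [pow_add, pow_add, pow_add, pow_add]
    ring
  rw [Finset.sum_congr rfl step1, Finset.sum_comm]
  refine Finset.sum_congr rfl fun i2 _ => ?_
  rw [Finset.sum_comm]
  refine Finset.sum_congr rfl fun i1 _ => ?_
  rw [Finset.sum_comm]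
  refine Finset.sum_congr rfl fun i0 _ => ?_
  rw [← Finset.mul_sum, aux_T hF hq2]

lemma master4 (hp : p.Prime) (he : 0 < e) (hq : q = p ^ e) (hF : Fintype.card F = q ^ 4)
    (a : ℕ → F) (f : F → F) (hf : ∀ x : F, f x = ∑ i ∈ Finset.range 4, a i * x ^ q ^ i)
    (k0 k1 k2 k3 : ℕ) :
    ∑ x ∈ Finset.univ.filter (fun x : F => x ≠ 0),
        (f x / x) ^ q ^ k0 * (f x / x) ^ q ^ k1 * (f x / x) ^ q ^ k2 * (f x / x) ^ q ^ k3
      = ∑ i3 ∈ Finset.range 4, ∑ i2 ∈ Finset.range 4, ∑ i1 ∈ Finset.range 4, ∑ i0 ∈ Finset.range 4,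
          a i0 ^ q ^ k0 * a i1 ^ q ^ k1 * a i2 ^ q ^ k2 * a i3 ^ q ^ k3 *
            (if (q ^ ((i0 + k0) % 4) + q ^ ((i1 + k1) % 4) + q ^ ((i2 + k2) % 4)
                  + q ^ ((i3 + k3) % 4)) % (q ^ 4 - 1)
                = (q ^ k0 + q ^ k1 + q ^ k2 + q ^ k3) % (q ^ 4 - 1) then (-1 : F) else 0) := by
  have hq2 : 2 ≤ q := q_ge_two hp he hq
  have step1 : ∀ x ∈ Finset.univ.filter (fun x : F => x ≠ 0),
      (f x / x) ^ q ^ k0 * (f x / x) ^ q ^ k1 * (f x / x) ^ q ^ k2 * (f x / x) ^ q ^ k3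
      = ∑ i3 ∈ Finset.range 4, ∑ i2 ∈ Finset.range 4, ∑ i1 ∈ Finset.range 4, ∑ i0 ∈ Finset.range 4,
          a i0 ^ q ^ k0 * a i1 ^ q ^ k1 * a i2 ^ q ^ k2 * a i3 ^ q ^ k3 *
            (x ^ (q ^ ((i0 + k0) % 4) + q ^ ((i1 + k1) % 4) + q ^ ((i2 + k2) % 4)
                + q ^ ((i3 + k3) % 4))
              / x ^ (q ^ k0 + q ^ k1 + q ^ k2 + q ^ k3)) := by
    intro x _
    rw [aux_factor hp he hq hF a f hf x k0, aux_factor hp he hq hF a f hf x k1,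
      aux_factor hp he hq hF a f hf x k2, aux_factor hp he hq hF a f hf x k3]
    simp only [Finset.sum_mul, Finset.mul_sum]
    refine Finset.sum_congr rfl fun i3 _ => Finset.sum_congr rfl fun i2 _ =>
      Finset.sum_congr rfl fun i1 _ => Finset.sum_congr rfl fun i0 _ => ?_
    rw [pow_add, pow_add, pow_add, pow_add, pow_add, pow_add]
    ring
  rw [Finset.sum_congr rfl step1, Finset.sum_comm]
  refine Finset.sum_congr rfl fun i3 _ => ?_
  rw [Finset.sum_comm]
  refine Finset.sum_congr rfl fun i2 _ => ?_
  rw [Finset.sum_comm]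
  refine Finset.sum_congr rfl fun i1 _ => ?_
  rw [Finset.sum_comm]
  refine Finset.sum_congr rfl fun i0 _ => ?_
  rw [← Finset.mul_sum, aux_T hF hq2]

end Expand

section CondVal
variable {q : ℕ} {F : Type} [Field F]

lemma cond1_val (hq2 : 2 ≤ q) {j0 k0 : ℕ} (h0 : j0 < 4) (g0 : k0 < 4) :
    (if q ^ j0 % (q ^ 4 - 1) = q ^ k0 % (q ^ 4 - 1) then (-1 : F) else 0)
      = if j0 = k0 then (-1 : F) else 0 := by
  by_cases h : j0 = k0
  · rw [if_pos ((cond1 hq2 h0 g0).mpr h), if_pos h]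
  · rw [if_neg (fun hc => h ((cond1 hq2 h0 g0).mp hc)), if_neg h]

lemma cond2_val (hq2 : 2 ≤ q) {j0 j1 k0 k1 : ℕ} (h0 : j0 < 4) (h1 : j1 < 4)
    (g0 : k0 < 4) (g1 : k1 < 4) (hk : k0 ≠ k1) :
    (if (q ^ j0 + q ^ j1) % (q ^ 4 - 1) = (q ^ k0 + q ^ k1) % (q ^ 4 - 1)
        then (-1 : F) else 0)
      = if ({j0, j1} : Multiset ℕ) = {k0, k1} then (-1 : F) else 0 := by
  by_cases h : ({j0, j1} : Multiset ℕ) = {k0, k1}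
  · rw [if_pos ((cond2 hq2 h0 h1 g0 g1 hk).mpr h), if_pos h]
  · rw [if_neg (fun hc => h ((cond2 hq2 h0 h1 g0 g1 hk).mp hc)), if_neg h]

lemma cond3_val (hq2 : 2 ≤ q) {j0 j1 j2 k0 k1 k2 : ℕ} (h0 : j0 < 4) (h1 : j1 < 4) (h2 : j2 < 4)
    (g0 : k0 < 4) (g1 : k1 < 4) (g2 : k2 < 4)
    (hk01 : k0 ≠ k1) (hk02 : k0 ≠ k2) (hk12 : k1 ≠ k2) :
    (if (q ^ j0 + q ^ j1 + q ^ j2) % (q ^ 4 - 1)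
        = (q ^ k0 + q ^ k1 + q ^ k2) % (q ^ 4 - 1) then (-1 : F) else 0)
      = if ({j0, j1, j2} : Multiset ℕ) = {k0, k1, k2} then (-1 : F) else 0 := by
  by_cases h : ({j0, j1, j2} : Multiset ℕ) = {k0, k1, k2}
  · rw [if_pos ((cond3 hq2 h0 h1 h2 g0 g1 g2 hk01 hk02 hk12).mpr h), if_pos h]
  · rw [if_neg (fun hc => h ((cond3 hq2 h0 h1 h2 g0 g1 g2 hk01 hk02 hk12).mp hc)), if_neg h]

lemma cond4_val (hq2 : 2 ≤ q) {j0 j1 j2 j3 : ℕ}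
    (h0 : j0 < 4) (h1 : j1 < 4) (h2 : j2 < 4) (h3 : j3 < 4) :
    (if (q ^ j0 + q ^ j1 + q ^ j2 + q ^ j3) % (q ^ 4 - 1)
        = (q ^ 0 + q ^ 1 + q ^ 2 + q ^ 3) % (q ^ 4 - 1) then (-1 : F) else 0)
      = if ({j0, j1, j2, j3} : Multiset ℕ) = {0, 1, 2, 3} then (-1 : F) else 0 := by
  by_cases h : ({j0, j1, j2, j3} : Multiset ℕ) = {0, 1, 2, 3}
  · rw [if_pos ((cond4 hq2 h0 h1 h2 h3).mpr h), if_pos h]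
  · rw [if_neg (fun hc => h ((cond4 hq2 h0 h1 h2 h3).mp hc)), if_neg h]

end CondVal

section Eval
variable {p e q : ℕ} {F : Type} [Field F] [Fintype F] [DecidableEq F]

lemma eval01 (hp : p.Prime) (he : 0 < e) (hq : q = p ^ e) (hF : Fintype.card F = q ^ 4)
    (a : ℕ → F) (f : F → F) (hf : ∀ x : F, f x = ∑ i ∈ Finset.range 4, a i * x ^ q ^ i) :
    ∑ x ∈ Finset.univ.filter (fun x : F => x ≠ 0), (f x / x) ^ (q ^ 0 + q ^ 1)
      = -(a 0 * a 0 ^ q + a 1 * a 3 ^ q) := by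
  have hq2 : 2 ≤ q := q_ge_two hp he hq
  have hsplit : ∀ x ∈ Finset.univ.filter (fun x : F => x ≠ 0),
      (f x / x) ^ (q ^ 0 + q ^ 1) = (f x / x) ^ q ^ 0 * (f x / x) ^ q ^ 1 :=
    fun x _ => pow_add _ _ _
  rw [Finset.sum_congr rfl hsplit, master2 hp he hq hF a f hf 0 1]
  simp only [Finset.sum_range_succ, Finset.sum_range_zero, Nat.reduceAdd, Nat.reduceMod]
  simp (config := { decide := true }) only [cond2_val hq2]
  norm_num
  ring

lemma eval0 (hp : p.Prime) (he : 0 < e) (hq : q = p ^ e) (hF : Fintype.card F = q ^ 4)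
    (a : ℕ → F) (f : F → F) (hf : ∀ x : F, f x = ∑ i ∈ Finset.range 4, a i * x ^ q ^ i) :
    ∑ x ∈ Finset.univ.filter (fun x : F => x ≠ 0), (f x / x) ^ q ^ 0
      = -(a 0) := by
  have hq2 : 2 ≤ q := q_ge_two hp he hq
  rw [master1 hp he hq hF a f hf 0]
  simp only [Finset.sum_range_succ, Finset.sum_range_zero, Nat.reduceAdd, Nat.reduceMod]
  simp (config := { decide := true }) only [cond1_val hq2]
  norm_num

lemma eval02 (hp : p.Prime) (he : 0 < e) (hq : q = p ^ e) (hF : Fintype.card F = q ^ 4)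
    (a : ℕ → F) (f : F → F) (hf : ∀ x : F, f x = ∑ i ∈ Finset.range 4, a i * x ^ q ^ i) :
    ∑ x ∈ Finset.univ.filter (fun x : F => x ≠ 0), (f x / x) ^ (q ^ 0 + q ^ 2)
      = -(a 0 * a 0 ^ q ^ 2 + a 2 * a 2 ^ q ^ 2) := by
  have hq2 : 2 ≤ q := q_ge_two hp he hq
  have hsplit : ∀ x ∈ Finset.univ.filter (fun x : F => x ≠ 0),
      (f x / x) ^ (q ^ 0 + q ^ 2) = (f x / x) ^ q ^ 0 * (f x / x) ^ q ^ 2 :=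
    fun x _ => pow_add _ _ _
  rw [Finset.sum_congr rfl hsplit, master2 hp he hq hF a f hf 0 2]
  simp only [Finset.sum_range_succ, Finset.sum_range_zero, Nat.reduceAdd, Nat.reduceMod]
  simp (config := { decide := true }) only [cond2_val hq2]
  norm_num
  ring

lemma eval03 (hp : p.Prime) (he : 0 < e) (hq : q = p ^ e) (hF : Fintype.card F = q ^ 4)
    (a : ℕ → F) (f : F → F) (hf : ∀ x : F, f x = ∑ i ∈ Finset.range 4, a i * x ^ q ^ i) :
    ∑ x ∈ Finset.univ.filter (fun x : F => x ≠ 0), (f x / x) ^ (q ^ 0 + q ^ 3)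
      = -(a 0 * a 0 ^ q ^ 3 + a 3 * a 1 ^ q ^ 3) := by
  have hq2 : 2 ≤ q := q_ge_two hp he hq
  have hsplit : ∀ x ∈ Finset.univ.filter (fun x : F => x ≠ 0),
      (f x / x) ^ (q ^ 0 + q ^ 3) = (f x / x) ^ q ^ 0 * (f x / x) ^ q ^ 3 :=
    fun x _ => pow_add _ _ _
  rw [Finset.sum_congr rfl hsplit, master2 hp he hq hF a f hf 0 3]
  simp only [Finset.sum_range_succ, Finset.sum_range_zero, Nat.reduceAdd, Nat.reduceMod]
  simp (config := { decide := true }) only [cond2_val hq2]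
  norm_num
  ring

lemma eval012 (hp : p.Prime) (he : 0 < e) (hq : q = p ^ e) (hF : Fintype.card F = q ^ 4)
    (a : ℕ → F) (f : F → F) (hf : ∀ x : F, f x = ∑ i ∈ Finset.range 4, a i * x ^ q ^ i) :
    ∑ x ∈ Finset.univ.filter (fun x : F => x ≠ 0), (f x / x) ^ (q ^ 0 + q ^ 1 + q ^ 2)
      = -(a 0 * a 0 ^ q * a 0 ^ q ^ 2 + a 1 * a 3 ^ q * a 0 ^ q ^ 2
          + a 2 * a 0 ^ q * a 2 ^ q ^ 2 + a 0 * a 1 ^ q * a 3 ^ q ^ 2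
          + a 1 * a 1 ^ q * a 2 ^ q ^ 2 + a 2 * a 3 ^ q * a 3 ^ q ^ 2) := by
  have hq2 : 2 ≤ q := q_ge_two hp he hq
  have hsplit : ∀ x ∈ Finset.univ.filter (fun x : F => x ≠ 0),
      (f x / x) ^ (q ^ 0 + q ^ 1 + q ^ 2)
        = (f x / x) ^ q ^ 0 * (f x / x) ^ q ^ 1 * (f x / x) ^ q ^ 2 :=
    fun x _ => by rw [pow_add, pow_add]
  rw [Finset.sum_congr rfl hsplit, master3 hp he hq hF a f hf 0 1 2]
  simp only [Finset.sum_range_succ, Finset.sum_range_zero, Nat.reduceAdd, Nat.reduceMod]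
  simp (config := { decide := true }) only [cond3_val hq2]
  norm_num
  ring

lemma eval013 (hp : p.Prime) (he : 0 < e) (hq : q = p ^ e) (hF : Fintype.card F = q ^ 4)
    (a : ℕ → F) (f : F → F) (hf : ∀ x : F, f x = ∑ i ∈ Finset.range 4, a i * x ^ q ^ i) :
    ∑ x ∈ Finset.univ.filter (fun x : F => x ≠ 0), (f x / x) ^ (q ^ 0 + q ^ 1 + q ^ 3)
      = -(a 0 * a 0 ^ q * a 0 ^ q ^ 3 + a 1 * a 3 ^ q * a 0 ^ q ^ 3
          + a 3 * a 0 ^ q * a 1 ^ q ^ 3 + a 0 * a 2 ^ q * a 2 ^ q ^ 3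
          + a 1 * a 2 ^ q * a 1 ^ q ^ 3 + a 3 * a 3 ^ q * a 2 ^ q ^ 3) := by
  have hq2 : 2 ≤ q := q_ge_two hp he hq
  have hsplit : ∀ x ∈ Finset.univ.filter (fun x : F => x ≠ 0),
      (f x / x) ^ (q ^ 0 + q ^ 1 + q ^ 3)
        = (f x / x) ^ q ^ 0 * (f x / x) ^ q ^ 1 * (f x / x) ^ q ^ 3 :=
    fun x _ => by rw [pow_add, pow_add]
  rw [Finset.sum_congr rfl hsplit, master3 hp he hq hF a f hf 0 1 3]
  simp only [Finset.sum_range_succ, Finset.sum_range_zero, Nat.reduceAdd, Nat.reduceMod]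
  simp (config := { decide := true }) only [cond3_val hq2]
  norm_num
  ring

lemma eval023 (hp : p.Prime) (he : 0 < e) (hq : q = p ^ e) (hF : Fintype.card F = q ^ 4)
    (a : ℕ → F) (f : F → F) (hf : ∀ x : F, f x = ∑ i ∈ Finset.range 4, a i * x ^ q ^ i) :
    ∑ x ∈ Finset.univ.filter (fun x : F => x ≠ 0), (f x / x) ^ (q ^ 0 + q ^ 2 + q ^ 3)
      = -(a 0 * a 0 ^ q ^ 2 * a 0 ^ q ^ 3 + a 2 * a 2 ^ q ^ 2 * a 0 ^ q ^ 3
          + a 3 * a 0 ^ q ^ 2 * a 1 ^ q ^ 3 + a 0 * a 1 ^ q ^ 2 * a 3 ^ q ^ 3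
          + a 2 * a 1 ^ q ^ 2 * a 1 ^ q ^ 3 + a 3 * a 2 ^ q ^ 2 * a 3 ^ q ^ 3) := by
  have hq2 : 2 ≤ q := q_ge_two hp he hq
  have hsplit : ∀ x ∈ Finset.univ.filter (fun x : F => x ≠ 0),
      (f x / x) ^ (q ^ 0 + q ^ 2 + q ^ 3)
        = (f x / x) ^ q ^ 0 * (f x / x) ^ q ^ 2 * (f x / x) ^ q ^ 3 :=
    fun x _ => by rw [pow_add, pow_add]
  rw [Finset.sum_congr rfl hsplit, master3 hp he hq hF a f hf 0 2 3]
  simp only [Finset.sum_range_succ, Finset.sum_range_zero, Nat.reduceAdd, Nat.reduceMod]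
  simp (config := { decide := true }) only [cond3_val hq2]
  norm_num
  ring

lemma eval0123 (hp : p.Prime) (he : 0 < e) (hq : q = p ^ e) (hF : Fintype.card F = q ^ 4)
    (a : ℕ → F) (f : F → F) (hf : ∀ x : F, f x = ∑ i ∈ Finset.range 4, a i * x ^ q ^ i) :
    ∑ x ∈ Finset.univ.filter (fun x : F => x ≠ 0), (f x / x) ^ (q ^ 0 + q ^ 1 + q ^ 2 + q ^ 3)
      = -(a 0 * a 0 ^ q * a 0 ^ q ^ 2 * a 0 ^ q ^ 3
          + a 0 * a 0 ^ q * a 1 ^ q ^ 2 * a 3 ^ q ^ 3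
          + a 0 * a 1 ^ q * a 3 ^ q ^ 2 * a 0 ^ q ^ 3
          + a 0 * a 1 ^ q * a 1 ^ q ^ 2 * a 2 ^ q ^ 3
          + a 0 * a 2 ^ q * a 3 ^ q ^ 2 * a 3 ^ q ^ 3
          + a 0 * a 2 ^ q * a 0 ^ q ^ 2 * a 2 ^ q ^ 3
          + a 1 * a 3 ^ q * a 0 ^ q ^ 2 * a 0 ^ q ^ 3
          + a 1 * a 3 ^ q * a 1 ^ q ^ 2 * a 3 ^ q ^ 3
          + a 1 * a 1 ^ q * a 2 ^ q ^ 2 * a 0 ^ q ^ 3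
          + a 1 * a 1 ^ q * a 1 ^ q ^ 2 * a 1 ^ q ^ 3
          + a 1 * a 2 ^ q * a 2 ^ q ^ 2 * a 3 ^ q ^ 3
          + a 1 * a 2 ^ q * a 0 ^ q ^ 2 * a 1 ^ q ^ 3
          + a 2 * a 3 ^ q * a 3 ^ q ^ 2 * a 0 ^ q ^ 3
          + a 2 * a 3 ^ q * a 1 ^ q ^ 2 * a 2 ^ q ^ 3
          + a 2 * a 0 ^ q * a 2 ^ q ^ 2 * a 0 ^ q ^ 3
          + a 2 * a 0 ^ q * a 1 ^ q ^ 2 * a 1 ^ q ^ 3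
          + a 2 * a 2 ^ q * a 2 ^ q ^ 2 * a 2 ^ q ^ 3
          + a 2 * a 2 ^ q * a 3 ^ q ^ 2 * a 1 ^ q ^ 3
          + a 3 * a 3 ^ q * a 3 ^ q ^ 2 * a 3 ^ q ^ 3
          + a 3 * a 3 ^ q * a 0 ^ q ^ 2 * a 2 ^ q ^ 3
          + a 3 * a 0 ^ q * a 2 ^ q ^ 2 * a 3 ^ q ^ 3
          + a 3 * a 0 ^ q * a 0 ^ q ^ 2 * a 1 ^ q ^ 3
          + a 3 * a 1 ^ q * a 2 ^ q ^ 2 * a 2 ^ q ^ 3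
          + a 3 * a 1 ^ q * a 3 ^ q ^ 2 * a 1 ^ q ^ 3) := by
  have hq2 : 2 ≤ q := q_ge_two hp he hq
  have hsplit : ∀ x ∈ Finset.univ.filter (fun x : F => x ≠ 0),
      (f x / x) ^ (q ^ 0 + q ^ 1 + q ^ 2 + q ^ 3)
        = (f x / x) ^ q ^ 0 * (f x / x) ^ q ^ 1 * (f x / x) ^ q ^ 2 * (f x / x) ^ q ^ 3 :=
    fun x _ => by rw [pow_add, pow_add, pow_add]
  rw [Finset.sum_congr rfl hsplit, master4 hp he hq hF a f hf 0 1 2 3]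
  simp only [Finset.sum_range_succ, Finset.sum_range_zero, Nat.reduceAdd, Nat.reduceMod]
  simp (config := { decide := true }) only [cond4_val hq2]
  norm_num
  ring

end Eval

section Bridge
variable {q : ℕ} {F : Type} [Field F] [Fintype F]

lemma bridge (hF : Fintype.card F = q ^ 4) (c : ℕ → F) :
    c 1 ^ (1 + q + q ^ 2 + q ^ 3) + c 2 ^ (1 + q + q ^ 2 + q ^ 3) + c 3 ^ (1 + q + q ^ 2 + q ^ 3)
        + c 1 ^ (1 + q ^ 2) * c 3 ^ (q + q ^ 3)
        + c 1 ^ (q + q ^ 3) * c 3 ^ (1 + q ^ 2)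
        + ((c 1 * c 2 ^ (q + q ^ 2) * c 3 ^ q ^ 3)
          + (c 1 * c 2 ^ (q + q ^ 2) * c 3 ^ q ^ 3) ^ q
          + (c 1 * c 2 ^ (q + q ^ 2) * c 3 ^ q ^ 3) ^ q ^ 2
          + (c 1 * c 2 ^ (q + q ^ 2) * c 3 ^ q ^ 3) ^ q ^ 3)
      = c 1 * c 3 ^ q * c 1 ^ q ^ 2 * c 3 ^ q ^ 3
        + c 1 * c 1 ^ q * c 1 ^ q ^ 2 * c 1 ^ q ^ 3
        + c 1 * c 2 ^ q * c 2 ^ q ^ 2 * c 3 ^ q ^ 3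
        + c 2 * c 3 ^ q * c 1 ^ q ^ 2 * c 2 ^ q ^ 3
        + c 2 * c 2 ^ q * c 2 ^ q ^ 2 * c 2 ^ q ^ 3
        + c 2 * c 2 ^ q * c 3 ^ q ^ 2 * c 1 ^ q ^ 3
        + c 3 * c 3 ^ q * c 3 ^ q ^ 2 * c 3 ^ q ^ 3
        + c 3 * c 1 ^ q * c 2 ^ q ^ 2 * c 2 ^ q ^ 3
        + c 3 * c 1 ^ q * c 3 ^ q ^ 2 * c 1 ^ q ^ 3 := by
  have hc2 : c 2 ^ q ^ 4 = c 2 := by rw [← hF]; exact FiniteField.pow_card (c 2)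
  have hc3 : c 3 ^ q ^ 4 = c 3 := by rw [← hF]; exact FiniteField.pow_card (c 3)
  have hc2b : c 2 ^ (q ^ 4 * q) = c 2 ^ q := by
    have h := congrArg (fun z : F => z ^ q) hc2
    rw [← h, ← pow_mul]
  have hc3b : c 3 ^ (q ^ 4 * q) = c 3 ^ q := by
    have h := congrArg (fun z : F => z ^ q) hc3
    rw [← h, ← pow_mul]
  have hc3c : c 3 ^ (q ^ 4 * q ^ 2) = c 3 ^ q ^ 2 := by
    have h := congrArg (fun z : F => z ^ q ^ 2) hc3
    rw [← h, ← pow_mul]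
  have r1 : (c 1 * c 2 ^ (q + q ^ 2) * c 3 ^ q ^ 3) ^ q
      = c 3 * c 1 ^ q * c 2 ^ q ^ 2 * c 2 ^ q ^ 3 := by
    linear_combination (c 1 ^ q * c 2 ^ (q ^ 2 + q ^ 3)) * hc3
  have r2 : (c 1 * c 2 ^ (q + q ^ 2) * c 3 ^ q ^ 3) ^ q ^ 2
      = c 2 * c 3 ^ q * c 1 ^ q ^ 2 * c 2 ^ q ^ 3 := by
    linear_combination (c 1 ^ q ^ 2 * c 2 ^ q ^ 3 * c 3 ^ (q ^ 4 * q)) * hc2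
      + (c 1 ^ q ^ 2 * c 2 * c 2 ^ q ^ 3) * hc3b
  have r3 : (c 1 * c 2 ^ (q + q ^ 2) * c 3 ^ q ^ 3) ^ q ^ 3
      = c 2 * c 2 ^ q * c 3 ^ q ^ 2 * c 1 ^ q ^ 3 := by
    linear_combination (c 1 ^ q ^ 3 * c 2 ^ (q ^ 4 * q) * c 3 ^ (q ^ 4 * q ^ 2)) * hc2
      + (c 1 ^ q ^ 3 * c 2 * c 3 ^ (q ^ 4 * q ^ 2)) * hc2b
      + (c 1 ^ q ^ 3 * c 2 * c 2 ^ q) * hc3c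
  linear_combination r1 + r2 + r3

end Bridge

/-- The norm of `F_{q^4}` over `F_q`. -/
def normq4 (q : ℕ) {F : Type} [Field F] (x : F) : F := x ^ (1 + q + q ^ 2 + q ^ 3)

/-- The trace of `F_{q^4}` over `F_q`. -/
def trq4 (q : ℕ) {F : Type} [Field F] (x : F) : F := x + x ^ q + x ^ q ^ 2 + x ^ q ^ 3

/-- an equation relating the coefficients of two q-polynomials over
`F_{q^4}` defining the same linear set of PG(1,q^4). -/
theorem stmt_7 (p e q : ℕ) (hp : p.Prime) (he : 0 < e) (hq : q = p ^ e)
    (F : Type) [Field F] [Fintype F] (hF : Fintype.card F = q ^ 4)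
    (a b : ℕ → F) (f g : F → F)
    (hf : ∀ x : F, f x = ∑ i ∈ Finset.range 4, a i * x ^ q ^ i)
    (hg : ∀ x : F, g x = ∑ i ∈ Finset.range 4, b i * x ^ q ^ i)
    (hD : {y : F | ∃ x : F, x ≠ 0 ∧ f x / x = y} = {y : F | ∃ x : F, x ≠ 0 ∧ g x / x = y}) :
    normq4 q (a 1) + normq4 q (a 2) + normq4 q (a 3)
        + (a 1) ^ (1 + q ^ 2) * (a 3) ^ (q + q ^ 3)
        + (a 1) ^ (q + q ^ 3) * (a 3) ^ (1 + q ^ 2)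
        + trq4 q (a 1 * (a 2) ^ (q + q ^ 2) * (a 3) ^ q ^ 3)
      = normq4 q (b 1) + normq4 q (b 2) + normq4 q (b 3)
        + (b 1) ^ (1 + q ^ 2) * (b 3) ^ (q + q ^ 3)
        + (b 1) ^ (q + q ^ 3) * (b 3) ^ (1 + q ^ 2)
        + trq4 q (b 1 * (b 2) ^ (q + q ^ 2) * (b 3) ^ q ^ 3) := by
  classical
  haveI := char_eq hp he hq hF
  haveI : Fact p.Prime := ⟨hp⟩
  have hfrob : ∀ x y : F, (x + y) ^ q = x ^ q + y ^ q := by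
    intro x y; rw [hq]; exact add_pow_char_pow x y p e
  -- invariant equalities
  have P := power_sums_eq hp he hq hF a b f g hf hg hD
  have E0 : a 0 = b 0 := by
    have h := P (q ^ 0)
    rw [eval0 hp he hq hF a f hf, eval0 hp he hq hF b g hg] at h
    exact neg_inj.mp h
  have E01 : a 0 * a 0 ^ q + a 1 * a 3 ^ q = b 0 * b 0 ^ q + b 1 * b 3 ^ q := by
    have h := P (q ^ 0 + q ^ 1)
    rw [eval01 hp he hq hF a f hf, eval01 hp he hq hF b g hg] at h
    exact neg_inj.mp h
  have E02 : a 0 * a 0 ^ q ^ 2 + a 2 * a 2 ^ q ^ 2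
      = b 0 * b 0 ^ q ^ 2 + b 2 * b 2 ^ q ^ 2 := by
    have h := P (q ^ 0 + q ^ 2)
    rw [eval02 hp he hq hF a f hf, eval02 hp he hq hF b g hg] at h
    exact neg_inj.mp h
  have E03 : a 0 * a 0 ^ q ^ 3 + a 3 * a 1 ^ q ^ 3
      = b 0 * b 0 ^ q ^ 3 + b 3 * b 1 ^ q ^ 3 := by
    have h := P (q ^ 0 + q ^ 3)
    rw [eval03 hp he hq hF a f hf, eval03 hp he hq hF b g hg] at h
    exact neg_inj.mp h
  have E012 := P (q ^ 0 + q ^ 1 + q ^ 2)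
  rw [eval012 hp he hq hF a f hf, eval012 hp he hq hF b g hg, neg_inj] at E012
  have E013 := P (q ^ 0 + q ^ 1 + q ^ 3)
  rw [eval013 hp he hq hF a f hf, eval013 hp he hq hF b g hg, neg_inj] at E013
  have E023 := P (q ^ 0 + q ^ 2 + q ^ 3)
  rw [eval023 hp he hq hF a f hf, eval023 hp he hq hF b g hg, neg_inj] at E023
  have E0123 := P (q ^ 0 + q ^ 1 + q ^ 2 + q ^ 3)
  rw [eval0123 hp he hq hF a f hf, eval0123 hp he hq hF b g hg, neg_inj] at E0123
  -- Frobenius twists of E0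
  have h0q : a 0 ^ q = b 0 ^ q := by rw [E0]
  have h0q2 : a 0 ^ q ^ 2 = b 0 ^ q ^ 2 := by rw [E0]
  have h0q3 : a 0 ^ q ^ 3 = b 0 ^ q ^ 3 := by rw [E0]
  -- pair invariants
  have D01 : a 1 * a 3 ^ q = b 1 * b 3 ^ q := by
    linear_combination E01 - a 0 * h0q - b 0 ^ q * E0
  have D02 : a 2 * a 2 ^ q ^ 2 = b 2 * b 2 ^ q ^ 2 := by
    linear_combination E02 - a 0 * h0q2 - b 0 ^ q ^ 2 * E0
  have D03 : a 3 * a 1 ^ q ^ 3 = b 3 * b 1 ^ q ^ 3 := by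
    linear_combination E03 - a 0 * h0q3 - b 0 ^ q ^ 3 * E0
  have D12 : a 1 ^ q * a 3 ^ q ^ 2 = b 1 ^ q * b 3 ^ q ^ 2 := by
    have h := congrArg (fun z : F => z ^ q) D01
    linear_combination h
  have D13 : a 2 ^ q * a 2 ^ q ^ 3 = b 2 ^ q * b 2 ^ q ^ 3 := by
    have h := congrArg (fun z : F => z ^ q) D02
    linear_combination h
  have D23 : a 1 ^ q ^ 2 * a 3 ^ q ^ 3 = b 1 ^ q ^ 2 * b 3 ^ q ^ 3 := by
    have h := congrArg (fun z : F => z ^ q ^ 2) D01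
    linear_combination h
  -- triple invariants
  have D012 : a 1 * a 1 ^ q * a 2 ^ q ^ 2 + a 2 * a 3 ^ q * a 3 ^ q ^ 2
      = b 1 * b 1 ^ q * b 2 ^ q ^ 2 + b 2 * b 3 ^ q * b 3 ^ q ^ 2 := by
    linear_combination E012 - (a 0 * a 0 ^ q) * h0q2 - (a 0 * b 0 ^ q ^ 2) * h0q
      - (b 0 ^ q * b 0 ^ q ^ 2) * E0
      - a 0 ^ q ^ 2 * D01 - (b 1 * b 3 ^ q) * h0q2
      - a 0 ^ q * D02 - (b 2 * b 2 ^ q ^ 2) * h0q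
      - a 0 * D12 - (b 1 ^ q * b 3 ^ q ^ 2) * E0
  have D013 : a 1 * a 2 ^ q * a 1 ^ q ^ 3 + a 3 * a 3 ^ q * a 2 ^ q ^ 3
      = b 1 * b 2 ^ q * b 1 ^ q ^ 3 + b 3 * b 3 ^ q * b 2 ^ q ^ 3 := by
    linear_combination E013 - (a 0 * a 0 ^ q) * h0q3 - (a 0 * b 0 ^ q ^ 3) * h0q
      - (b 0 ^ q * b 0 ^ q ^ 3) * E0
      - a 0 ^ q ^ 3 * D01 - (b 1 * b 3 ^ q) * h0q3
      - a 0 ^ q * D03 - (b 3 * b 1 ^ q ^ 3) * h0q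
      - a 0 * D13 - (b 2 ^ q * b 2 ^ q ^ 3) * E0
  have D023 : a 2 * a 1 ^ q ^ 2 * a 1 ^ q ^ 3 + a 3 * a 2 ^ q ^ 2 * a 3 ^ q ^ 3
      = b 2 * b 1 ^ q ^ 2 * b 1 ^ q ^ 3 + b 3 * b 2 ^ q ^ 2 * b 3 ^ q ^ 3 := by
    linear_combination E023 - (a 0 * a 0 ^ q ^ 2) * h0q3 - (a 0 * b 0 ^ q ^ 3) * h0q2
      - (b 0 ^ q ^ 2 * b 0 ^ q ^ 3) * E0
      - a 0 ^ q ^ 3 * D02 - (b 2 * b 2 ^ q ^ 2) * h0q3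
      - a 0 ^ q ^ 2 * D03 - (b 3 * b 1 ^ q ^ 3) * h0q2
      - a 0 * D23 - (b 1 ^ q ^ 2 * b 3 ^ q ^ 3) * E0
  have D123 : a 1 ^ q * a 1 ^ q ^ 2 * a 2 ^ q ^ 3 + a 2 ^ q * a 3 ^ q ^ 2 * a 3 ^ q ^ 3
      = b 1 ^ q * b 1 ^ q ^ 2 * b 2 ^ q ^ 3 + b 2 ^ q * b 3 ^ q ^ 2 * b 3 ^ q ^ 3 := by
    have h := congrArg (fun z : F => z ^ q) D012
    rw [hfrob, hfrob] at h
    linear_combination h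
  -- the final derangement invariant
  have D0123 :
      a 1 * a 3 ^ q * a 1 ^ q ^ 2 * a 3 ^ q ^ 3
        + a 1 * a 1 ^ q * a 1 ^ q ^ 2 * a 1 ^ q ^ 3
        + a 1 * a 2 ^ q * a 2 ^ q ^ 2 * a 3 ^ q ^ 3
        + a 2 * a 3 ^ q * a 1 ^ q ^ 2 * a 2 ^ q ^ 3
        + a 2 * a 2 ^ q * a 2 ^ q ^ 2 * a 2 ^ q ^ 3
        + a 2 * a 2 ^ q * a 3 ^ q ^ 2 * a 1 ^ q ^ 3
        + a 3 * a 3 ^ q * a 3 ^ q ^ 2 * a 3 ^ q ^ 3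
        + a 3 * a 1 ^ q * a 2 ^ q ^ 2 * a 2 ^ q ^ 3
        + a 3 * a 1 ^ q * a 3 ^ q ^ 2 * a 1 ^ q ^ 3
      = b 1 * b 3 ^ q * b 1 ^ q ^ 2 * b 3 ^ q ^ 3
        + b 1 * b 1 ^ q * b 1 ^ q ^ 2 * b 1 ^ q ^ 3
        + b 1 * b 2 ^ q * b 2 ^ q ^ 2 * b 3 ^ q ^ 3
        + b 2 * b 3 ^ q * b 1 ^ q ^ 2 * b 2 ^ q ^ 3
        + b 2 * b 2 ^ q * b 2 ^ q ^ 2 * b 2 ^ q ^ 3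
        + b 2 * b 2 ^ q * b 3 ^ q ^ 2 * b 1 ^ q ^ 3
        + b 3 * b 3 ^ q * b 3 ^ q ^ 2 * b 3 ^ q ^ 3
        + b 3 * b 1 ^ q * b 2 ^ q ^ 2 * b 2 ^ q ^ 3
        + b 3 * b 1 ^ q * b 3 ^ q ^ 2 * b 1 ^ q ^ 3 := by
    linear_combination E0123
      - (a 0 * a 0 ^ q * a 0 ^ q ^ 2) * h0q3 - (a 0 * a 0 ^ q * b 0 ^ q ^ 3) * h0q2
      - (a 0 * b 0 ^ q ^ 2 * b 0 ^ q ^ 3) * h0q - (b 0 ^ q * b 0 ^ q ^ 2 * b 0 ^ q ^ 3) * E0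
      - (a 0 * a 0 ^ q) * D23 - (b 1 ^ q ^ 2 * b 3 ^ q ^ 3) * (a 0 * h0q + b 0 ^ q * E0)
      - (a 0 * a 0 ^ q ^ 2) * D13 - (b 2 ^ q * b 2 ^ q ^ 3) * (a 0 * h0q2 + b 0 ^ q ^ 2 * E0)
      - (a 0 * a 0 ^ q ^ 3) * D12 - (b 1 ^ q * b 3 ^ q ^ 2) * (a 0 * h0q3 + b 0 ^ q ^ 3 * E0)
      - (a 0 ^ q * a 0 ^ q ^ 2) * D03 - (b 3 * b 1 ^ q ^ 3) * (a 0 ^ q * h0q2 + b 0 ^ q ^ 2 * h0q)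
      - (a 0 ^ q * a 0 ^ q ^ 3) * D02 - (b 2 * b 2 ^ q ^ 2) * (a 0 ^ q * h0q3 + b 0 ^ q ^ 3 * h0q)
      - (a 0 ^ q ^ 2 * a 0 ^ q ^ 3) * D01 - (b 1 * b 3 ^ q) * (a 0 ^ q ^ 2 * h0q3 + b 0 ^ q ^ 3 * h0q2)
      - a 0 * D123 - (b 1 ^ q * b 1 ^ q ^ 2 * b 2 ^ q ^ 3 + b 2 ^ q * b 3 ^ q ^ 2 * b 3 ^ q ^ 3) * E0
      - a 0 ^ q * D023 - (b 2 * b 1 ^ q ^ 2 * b 1 ^ q ^ 3 + b 3 * b 2 ^ q ^ 2 * b 3 ^ q ^ 3) * h0q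
      - a 0 ^ q ^ 2 * D013 - (b 1 * b 2 ^ q * b 1 ^ q ^ 3 + b 3 * b 3 ^ q * b 2 ^ q ^ 3) * h0q2
      - a 0 ^ q ^ 3 * D012 - (b 1 * b 1 ^ q * b 2 ^ q ^ 2 + b 2 * b 3 ^ q * b 3 ^ q ^ 2) * h0q3
  -- conclude via the bridge
  have Ba := bridge hF a
  have Bb := bridge hF b
  simp only [normq4, trq4]
  linear_combination Ba - Bb + D0123
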